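/- Let p, f₊, f₋ be pmfs on a finite set α. If H(p‖f₊) ≤ (1/2)·H(f₊‖f₋), then D(p‖f₋) ≥ (1/2)·H²(f₊‖f₋). -/

import Mathlib

/-- `p` is a probability mass function on the finite type `α`. -/
def IsPmf {α : Type*} [Fintype α] (p : α → ℝ) : Prop :=
  (∀ a, 0 ≤ p a) ∧ ∑ a, p a = 1

/-- Squared Hellinger divergence between pmfs on a finite type. -/
noncomputable def hellingerSq {α : Type*} [Fintype α] (p q : α → ℝ) : ℝ :=
  (1 / 2) * ∑ a, (Real.sqrt (p a) - Real.sqrt (q a)) ^ 2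

/-- Hellinger distance between pmfs on a finite type. -/
noncomputable def hellinger {α : Type*} [Fintype α] (p q : α → ℝ) : ℝ :=
  Real.sqrt (hellingerSq p q)

/-- Kullback–Leibler divergence between pmfs on a finite type, valued in `EReal`:
it is `+∞` unless `p` is absolutely continuous with respect to `q`, in which case it is
`∑ a, p a * log (p a / q a)` (with `0 * log (0/x) = 0`). -/
noncomputable def klDiv {α : Type*} [Fintype α] (p q : α → ℝ) : EReal :=
  if ∀ a, q a = 0 → p a = 0 then ((∑ a, p a * Real.log (p a / q a) : ℝ) : EReal) else ⊤

private lemma aux_log_ge (x : ℝ) (hx : 0 < x) : 2 - 2 / Real.sqrt x ≤ Real.log x := by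
  have ht : 0 < Real.sqrt x := Real.sqrt_pos.2 hx
  have h1 : Real.log (1 / Real.sqrt x) ≤ 1 / Real.sqrt x - 1 :=
    Real.log_le_sub_one_of_pos (by positivity)
  rw [Real.log_div one_ne_zero (ne_of_gt ht), Real.log_one, Real.log_sqrt hx.le,
    one_div, zero_sub] at h1
  have h2 : 2 / Real.sqrt x = 2 * (Real.sqrt x)⁻¹ := by rw [div_eq_mul_inv]
  rw [h2]
  linarith

private lemma aux_pointwise (a b : ℝ) (ha : 0 ≤ a) (hb : 0 ≤ b) (hab : b = 0 → a = 0) :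
    2 * a - 2 * Real.sqrt a * Real.sqrt b ≤ a * Real.log (a / b) := by
  rcases eq_or_lt_of_le ha with h | ha'
  · simp [← h]
  · have hb' : 0 < b := lt_of_le_of_ne hb (fun h => by simp [hab h.symm] at ha')
    have hx : 0 < a / b := div_pos ha' hb'
    have hlog := aux_log_ge (a / b) hx
    have hsa : 0 < Real.sqrt a := Real.sqrt_pos.2 ha'
    have hsb : 0 < Real.sqrt b := Real.sqrt_pos.2 hb'
    have hsq : Real.sqrt (a / b) = Real.sqrt a / Real.sqrt b := Real.sqrt_div ha b
    rw [hsq] at hlog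
    have key : 2 - 2 * Real.sqrt b / Real.sqrt a ≤ Real.log (a / b) := by
      have h2 : 2 / (Real.sqrt a / Real.sqrt b) = 2 * Real.sqrt b / Real.sqrt a := by
        field_simp
      linarith [h2 ▸ hlog]
    have hmul := mul_le_mul_of_nonneg_left key ha'.le
    have ha2 : Real.sqrt a * Real.sqrt a = a := Real.mul_self_sqrt ha
    have heq : a * (2 - 2 * Real.sqrt b / Real.sqrt a)
        = 2 * a - 2 * Real.sqrt a * Real.sqrt b := by
      field_simp
      nlinarith [ha2]
    linarith [heq ▸ hmul]

/-- If `H(p‖f₊) ≤ H(f₊‖f₋)/2`, then `D(p‖f₋) ≥ H²(f₊‖f₋)/2`. -/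
theorem klDiv_ge_of_hellinger_close {α : Type*} [Fintype α]
    (p fP fM : α → ℝ) (hp : IsPmf p) (hfP : IsPmf fP) (hfM : IsPmf fM)
    (hclose : hellinger p fP ≤ (1 / 2) * hellinger fP fM) :
    (((1 / 2) * hellingerSq fP fM : ℝ) : EReal) ≤ klDiv p fM := by
  unfold klDiv
  split_ifs with hac
  · -- absolutely continuous case
    rw [EReal.coe_le_coe_iff]
    set SpP := ∑ a, (Real.sqrt (p a) - Real.sqrt (fP a)) ^ 2 with hSpP
    set SPM := ∑ a, (Real.sqrt (fP a) - Real.sqrt (fM a)) ^ 2 with hSPM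
    set SpM := ∑ a, (Real.sqrt (p a) - Real.sqrt (fM a)) ^ 2 with hSpM
    have hSPM0 : 0 ≤ SPM := Finset.sum_nonneg fun a _ => sq_nonneg _
    have hSpM0 : 0 ≤ SpM := Finset.sum_nonneg fun a _ => sq_nonneg _
    -- triangle inequality in Euclidean space
    have htri : Real.sqrt SPM ≤ Real.sqrt SpP + Real.sqrt SpM := by
      let x : EuclideanSpace ℝ α := WithLp.toLp 2 (fun a => Real.sqrt (p a))
      let y : EuclideanSpace ℝ α := WithLp.toLp 2 (fun a => Real.sqrt (fP a))
      let z : EuclideanSpace ℝ α := WithLp.toLp 2 (fun a => Real.sqrt (fM a))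
      have hd : ∀ u v : EuclideanSpace ℝ α,
          dist u v = Real.sqrt (∑ a, (u a - v a) ^ 2) := by
        intro u v
        rw [EuclideanSpace.dist_eq]
        congr 1
        exact Finset.sum_congr rfl fun a _ => by rw [Real.dist_eq, sq_abs]
      have h := dist_triangle y x z
      rw [hd y x, hd x z, hd y z] at h
      have hyx : ∑ a, (y a - x a) ^ 2 = SpP :=
        Finset.sum_congr rfl fun a _ => by ring
      have hxz : (∑ a, (x a - z a) ^ 2) = SpM := rfl
      have hyz : (∑ a, (y a - z a) ^ 2) = SPM := rfl
      rw [hyx, hxz, hyz] at h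
      exact h
    -- rewrite hclose
    have hc2 : Real.sqrt SpP ≤ (1 / 2) * Real.sqrt SPM := by
      have h1 : hellinger p fP = Real.sqrt (1/2) * Real.sqrt SpP := by
        rw [hellinger, hellingerSq, Real.sqrt_mul (by norm_num)]
      have h2 : hellinger fP fM = Real.sqrt (1/2) * Real.sqrt SPM := by
        rw [hellinger, hellingerSq, Real.sqrt_mul (by norm_num)]
      rw [h1, h2] at hclose
      have hpos : (0:ℝ) < Real.sqrt (1/2) := Real.sqrt_pos.2 (by norm_num)
      nlinarith [hclose]
    have hge : (1/2) * Real.sqrt SPM ≤ Real.sqrt SpM := by linarith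
    have hsq : (1/4) * SPM ≤ SpM := by
      have h1 : Real.sqrt SpM ^ 2 = SpM := Real.sq_sqrt hSpM0
      have h2 : Real.sqrt SPM ^ 2 = SPM := Real.sq_sqrt hSPM0
      have h3 : (0:ℝ) ≤ Real.sqrt SPM := Real.sqrt_nonneg _
      nlinarith [hge]
    -- KL ≥ SpM
    set T := ∑ a, Real.sqrt (p a) * Real.sqrt (fM a) with hT
    have hKL : SpM ≤ ∑ a, p a * Real.log (p a / fM a) := by
      have hsum := Finset.sum_le_sum (fun a (_ : a ∈ Finset.univ) =>
        aux_pointwise (p a) (fM a) (hp.1 a) (hfM.1 a) (hac a))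
      have hL : ∑ a, (2 * p a - 2 * Real.sqrt (p a) * Real.sqrt (fM a))
          = 2 * (∑ a, p a) - 2 * T := by
        rw [hT, Finset.mul_sum, Finset.mul_sum, ← Finset.sum_sub_distrib]
        exact Finset.sum_congr rfl fun a _ => by ring
      have hR : SpM = (∑ a, p a) + (∑ a, fM a) - 2 * T := by
        rw [hSpM, hT, Finset.mul_sum, ← Finset.sum_add_distrib, ← Finset.sum_sub_distrib]
        refine Finset.sum_congr rfl fun a _ => ?_
        have h1 := Real.sq_sqrt (hp.1 a)
        have h2 := Real.sq_sqrt (hfM.1 a)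
        nlinarith [h1, h2]
      rw [hL, hp.2] at hsum
      rw [hR, hp.2, hfM.2]
      linarith
    have hH : hellingerSq fP fM = (1/2) * SPM := rfl
    rw [hH]
    linarith
  · exact le_top
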